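/- Let (M,d) be a homogeneous metric space, let G be a subgroup of Iso(M,d) that acts transitively on M, endowed with the topology of pointwise convergence, and fix o ∈ M and ε > 0. Then there exists an admissible left-invariant distance function d_G on G such that the orbit map π : g ↦ g(o) from (G,d_G) to (M,d) is 1-Lipschitz and a (1,ε)-quasi-isometry. In particular, Iso(M,d) is metrisable. -/

import Mathlib

/-- `f` is an `(L, C)`-quasi-isometry between the distances `dX` and `dY`. -/
def IsQuasiIsometry {X Y : Type*} (L C : ℝ) (dX : X → X → ℝ) (dY : Y → Y → ℝ)
    (f : X → Y) : Prop :=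
  (∀ x y : X, L⁻¹ * dX x y - C ≤ dY (f x) (f y) ∧ dY (f x) (f y) ≤ L * dX x y + C) ∧
  ∀ z : Y, ∃ x : X, dY (f x) z ≤ C

/-- `d` is a distance function on `X` inducing the given topology (admissibility). -/
def IsCompatibleDist (X : Type*) [TopologicalSpace X] (d : X → X → ℝ) : Prop :=
  (∀ x y : X, d x y = 0 ↔ x = y) ∧ (∀ x y : X, d x y = d y x) ∧
  (∀ x y z : X, d x z ≤ d x y + d y z) ∧
  ∀ (x : X) (s : Set X), s ∈ nhds x ↔ ∃ ε > 0, {y : X | d x y < ε} ⊆ s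

/-- Left-invariance of a distance function on a group. -/
def IsLeftInvariant {G : Type*} [Group G] (d : G → G → ℝ) : Prop :=
  ∀ g x y : G, d (g * x) (g * y) = d x y

open Metric Filter Set TopologicalSpace

private lemma min_add_le' {c a b : ℝ} (hc : 0 ≤ c) (ha : 0 ≤ a) (hb : 0 ≤ b) :
    min c (a + b) ≤ min c a + min c b := by
  rcases le_total c a with h | h
  · calc min c (a + b) ≤ c := min_le_left _ _
      _ = min c a := (min_eq_left h).symm
      _ ≤ min c a + min c b := le_add_of_nonneg_right (le_min hc hb)
  · rcases le_total c b with h' | h'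
    · calc min c (a + b) ≤ c := min_le_left _ _
        _ = min c b := (min_eq_left h').symm
        _ ≤ min c a + min c b := le_add_of_nonneg_left (le_min hc ha)
    · calc min c (a + b) ≤ a + b := min_le_right _ _
        _ = min c a + min c b := by rw [min_eq_right h, min_eq_right h']

private lemma distA {M : Type*} [MetricSpace M] (f g : M ≃ᵢ M) (p q : M) :
    dist (f p) (g p) ≤ dist (f q) (g q) + 2 * dist p q := by
  calc dist (f p) (g p) ≤ dist (f p) (f q) + dist (f q) (g q) + dist (g q) (g p) :=
        dist_triangle4 _ _ _ _
    _ = dist p q + dist (f q) (g q) + dist q p := by rw [f.dist_eq, g.dist_eq]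
    _ = dist (f q) (g q) + 2 * dist p q := by rw [dist_comm q p]; ring

/-- A connected locally compact metric space is separable: there is a dense sequence
starting at any prescribed point. -/
private lemma exists_dense_seq_start {M : Type*} [MetricSpace M] [ConnectedSpace M]
    [LocallyCompactSpace M] (o : M) : ∃ x : ℕ → M, DenseRange x ∧ x 0 = o := by
  classical
  set S : M → Set ℝ := fun p => {r : ℝ | r ≤ 1 ∧ 0 < r ∧ IsCompact (closedBall p r)} with hS
  have hSne : ∀ p, (S p).Nonempty := by
    intro p
    obtain ⟨r, hr, hc⟩ := exists_isCompact_closedBall p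
    exact ⟨min r 1, min_le_right _ _, lt_min hr one_pos,
      hc.of_isClosed_subset isClosed_closedBall (closedBall_subset_closedBall (min_le_left _ _))⟩
  have hSbdd : ∀ p, BddAbove (S p) := fun p => ⟨1, fun r hr => hr.1⟩
  set ρ : M → ℝ := fun p => sSup (S p) with hρ
  have hρpos : ∀ p, 0 < ρ p := by
    intro p
    obtain ⟨r, hr⟩ := hSne p
    exact lt_of_lt_of_le hr.2.1 (le_csSup (hSbdd p) hr)
  have hρlip : ∀ p q : M, ρ p - dist p q ≤ ρ q := by
    intro p q
    rw [sub_le_iff_le_add]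
    refine csSup_le (hSne p) fun r hr => ?_
    rcases le_or_gt r (dist p q) with h | h
    · linarith [hρpos q]
    · have hmem : r - dist p q ∈ S q := by
        have hdnn : (0:ℝ) ≤ dist p q := dist_nonneg
        refine ⟨by linarith [hr.1], sub_pos.2 h, ?_⟩
        refine hr.2.2.of_isClosed_subset isClosed_closedBall fun z hz => ?_
        rw [mem_closedBall] at hz ⊢
        calc dist z p ≤ dist z q + dist q p := dist_triangle _ _ _
          _ ≤ (r - dist p q) + dist p q := by rw [dist_comm q p]; linarith
          _ = r := by ring
      linarith [le_csSup (hSbdd q) hmem]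
  have hcomp : ∀ p, IsCompact (closedBall p (ρ p / 2)) := by
    intro p
    obtain ⟨r, hrS, hlt⟩ := exists_lt_of_lt_csSup (hSne p) (half_lt_self (hρpos p))
    exact hrS.2.2.of_isClosed_subset isClosed_closedBall (closedBall_subset_closedBall hlt.le)
  choose c hc using fun p => (hcomp p).isSeparable
  -- iteratively saturate
  set D : ℕ → Set M := fun n => Nat.rec {o} (fun _ Dn => Dn ∪ ⋃ p ∈ Dn, c p) n with hD
  have hDsucc : ∀ n, D (n + 1) = D n ∪ ⋃ p ∈ D n, c p := fun n => rfl
  have hDcount : ∀ n, (D n).Countable := by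
    intro n
    induction n with
    | zero => exact countable_singleton o
    | succ k ih => exact ih.union (ih.biUnion fun p _ => (hc p).1)
  set E : Set M := ⋃ n, D n with hE
  have hEcount : E.Countable := countable_iUnion hDcount
  have hoE : o ∈ E := mem_iUnion.2 ⟨0, rfl⟩
  have hcE : ∀ p ∈ E, c p ⊆ E := by
    intro p hp
    obtain ⟨n, hn⟩ := mem_iUnion.1 hp
    intro z hz
    exact mem_iUnion.2 ⟨n + 1, by rw [hDsucc]; exact Or.inr (mem_biUnion hn hz)⟩
  have hopen : IsOpen (closure E) := by
    rw [isOpen_iff_mem_nhds]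
    intro y hy
    obtain ⟨p, hpE, hpd⟩ := Metric.mem_closure_iff.1 hy (ρ y / 8) (by linarith [hρpos y])
    have hlip := hρlip y p
    have h1 : ball y (ρ y / 4) ⊆ closedBall p (ρ p / 2) := by
      intro z hz
      rw [mem_ball] at hz
      rw [mem_closedBall]
      calc dist z p ≤ dist z y + dist y p := dist_triangle _ _ _
        _ ≤ ρ y / 4 + ρ y / 8 := by linarith
        _ ≤ ρ p / 2 := by linarith [hρpos y]
    have h2 : ball y (ρ y / 4) ⊆ closure E :=
      h1.trans ((hc p).2.trans (closure_mono (hcE p hpE)))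
    exact Filter.mem_of_superset (ball_mem_nhds y (by linarith [hρpos y])) h2
  have hclo : closure E = univ :=
    IsClopen.eq_univ ⟨isClosed_closure, hopen⟩ ⟨o, subset_closure hoE⟩
  haveI : SeparableSpace M := ⟨⟨E, hEcount, dense_iff_closure_eq.2 hclo⟩⟩
  haveI : Nonempty M := ⟨o⟩
  obtain ⟨u, hu⟩ := exists_dense_seq M
  refine ⟨fun n => Nat.casesOn n o u, ?_, rfl⟩
  have hsub : range u ⊆ range (fun n => Nat.casesOn n o u : ℕ → M) := by
    rintro z ⟨k, hk⟩; exact ⟨k + 1, hk⟩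
  exact hu.mono hsub

/-- The key construction: a good distance on the isometry group. -/
private lemma exists_good_dist {M : Type*} [MetricSpace M] (x : ℕ → M) (hx : DenseRange x)
    (ε : ℝ) (hε : 0 < ε) :
    ∃ d : (M ≃ᵢ M) → (M ≃ᵢ M) → ℝ,
      (∀ f g, d f g = 0 ↔ f = g) ∧ (∀ f g, d f g = d g f) ∧
      (∀ f g h, d f h ≤ d f g + d g h) ∧
      (∀ (f : M ≃ᵢ M) (s : Set (M ≃ᵢ M)),
        s ∈ @nhds _ (TopologicalSpace.induced (fun f : M ≃ᵢ M => (⇑f : M → M))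
          Pi.topologicalSpace) f ↔ ∃ r > 0, {g : M ≃ᵢ M | d f g < r} ⊆ s) ∧
      (∀ k f g, d (k * f) (k * g) = d f g) ∧
      (∀ f g, dist (f (x 0)) (g (x 0)) ≤ d f g) ∧
      (∀ f g, d f g ≤ dist (f (x 0)) (g (x 0)) + ε) := by
  classical
  set c : ℕ → ℝ := fun n => ε / 2 / 2 ^ n with hc
  have hcpos : ∀ n, 0 < c n := fun n => by positivity
  have hcsum : Summable c := summable_geometric_two' ε
  have hctsum : ∑' n, c n = ε := tsum_geometric_two' ε
  have hcanti : ∀ {m n : ℕ}, m ≤ n → c n ≤ c m := by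
    intro m n hmn
    simp only [hc]
    gcongr
    all_goals first | exact hmn | norm_num
  set t : (M ≃ᵢ M) → (M ≃ᵢ M) → ℕ → ℝ :=
    fun f g n => min (c n) (dist (f (x n)) (g (x n))) with ht
  have htnonneg : ∀ f g n, 0 ≤ t f g n := fun f g n => le_min (hcpos n).le dist_nonneg
  have htsumm : ∀ f g, Summable (t f g) := fun f g =>
    hcsum.of_nonneg_of_le (htnonneg f g) fun n => min_le_left _ _
  set T : (M ≃ᵢ M) → (M ≃ᵢ M) → ℝ := fun f g => ∑' n, t f g n with hT
  have hTnonneg : ∀ f g, 0 ≤ T f g := fun f g => tsum_nonneg (htnonneg f g)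
  have htle : ∀ f g n, t f g n ≤ T f g := fun f g n =>
    Summable.le_tsum (htsumm f g) n fun j _ => htnonneg f g j
  have hTle : ∀ f g, T f g ≤ ε := fun f g => by
    rw [← hctsum]; exact Summable.tsum_le_tsum (fun n => min_le_left _ _) (htsumm f g) hcsum
  set d : (M ≃ᵢ M) → (M ≃ᵢ M) → ℝ := fun f g => dist (f (x 0)) (g (x 0)) + T f g with hd
  have hTd : ∀ f g, T f g ≤ d f g := fun f g => le_add_of_nonneg_left dist_nonneg
  -- basic metric axioms
  have hdzero : ∀ f g, d f g = 0 ↔ f = g := by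
    intro f g
    constructor
    · intro h0
      have hT0 : T f g ≤ 0 := by
        have := hTd f g; linarith
      have hpt : ∀ n, f (x n) = g (x n) := by
        intro n
        have h1 : t f g n ≤ 0 := le_trans (htle f g n) hT0
        have h3 : t f g n = 0 := le_antisymm h1 (htnonneg f g n)
        have hdist0 : dist (f (x n)) (g (x n)) ≤ 0 := by
          rcases le_or_gt (dist (f (x n)) (g (x n))) 0 with h | h
          · exact h
          · have := lt_min (hcpos n) h
            rw [ht] at h3
            simp only at h3
            linarith
        exact dist_le_zero.1 hdist0
      refine IsometryEquiv.ext fun p => ?_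
      have hle : ∀ δ : ℝ, 0 < δ → dist (f p) (g p) ≤ 0 + δ := by
        intro δ hδ
        obtain ⟨n, hn⟩ := hx.exists_dist_lt p (show (0:ℝ) < δ / 2 by linarith)
        calc dist (f p) (g p) ≤ dist (f (x n)) (g (x n)) + 2 * dist p (x n) := distA f g p (x n)
          _ ≤ 0 + δ := by rw [hpt n, dist_self]; linarith
      have : dist (f p) (g p) ≤ 0 := le_of_forall_pos_le_add fun δ hδ => by
        simpa using hle δ hδ
      exact dist_le_zero.1 this
    · rintro rfl
      have hTself : T f f = 0 := by
        rw [hT]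
        have : ∀ n, t f f n = 0 := by
          intro n; rw [ht]; simp [min_eq_right (hcpos n).le]
        simp [this]
      rw [hd]; simp [hTself]
  have hdsymm : ∀ f g, d f g = d g f := by
    intro f g
    rw [hd]
    simp only
    rw [dist_comm (f (x 0))]
    congr 1
    exact tsum_congr fun n => by rw [ht]; simp only; rw [dist_comm (f (x n))]
  have hdtri : ∀ f g h, d f h ≤ d f g + d g h := by
    intro f g h
    have h1 : T f h ≤ T f g + T g h := by
      rw [hT]
      simp only
      rw [← Summable.tsum_add (htsumm f g) (htsumm g h)]
      refine Summable.tsum_le_tsum (fun n => ?_) (htsumm f h) ((htsumm f g).add (htsumm g h))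
      calc t f h n ≤ min (c n) (dist (f (x n)) (g (x n)) + dist (g (x n)) (h (x n))) :=
            min_le_min le_rfl (dist_triangle _ _ _)
        _ ≤ t f g n + t g h n := min_add_le' (hcpos n).le dist_nonneg dist_nonneg
    have h2 : dist (f (x 0)) (h (x 0)) ≤ dist (f (x 0)) (g (x 0)) + dist (g (x 0)) (h (x 0)) :=
      dist_triangle _ _ _
    rw [hd]; simp only; linarith
  have hdinv : ∀ k f g, d (k * f) (k * g) = d f g := by
    intro k f g
    have hdd : ∀ p : M, dist ((k * f) p) ((k * g) p) = dist (f p) (g p) := fun p =>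
      k.dist_eq _ _
    rw [hd]
    simp only [hdd]
    congr 1
    exact tsum_congr fun n => by rw [ht]; simp only [hdd]
  have hlow : ∀ f g, dist (f (x 0)) (g (x 0)) ≤ d f g := fun f g =>
    le_add_of_nonneg_right (hTnonneg f g)
  have hupp : ∀ f g, d f g ≤ dist (f (x 0)) (g (x 0)) + ε := fun f g =>
    add_le_add le_rfl (hTle f g)
  -- neighbourhood characterisation
  have hnhds : ∀ (f : M ≃ᵢ M) (s : Set (M ≃ᵢ M)),
      s ∈ @nhds _ (TopologicalSpace.induced (fun f : M ≃ᵢ M => (⇑f : M → M))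
        Pi.topologicalSpace) f ↔
      ∃ (F : Finset M) (δ : ℝ), 0 < δ ∧
        {g : M ≃ᵢ M | ∀ p ∈ F, dist (f p) (g p) < δ} ⊆ s := by
    intro f s
    rw [nhds_induced, Filter.mem_comap]
    constructor
    · rintro ⟨u, hu, hsub⟩
      rw [nhds_pi, Filter.mem_pi] at hu
      obtain ⟨I, hIfin, V, hV, hVsub⟩ := hu
      choose δ hδpos hδsub using fun p => Metric.mem_nhds_iff.1 (hV p)
      refine ⟨hIfin.toFinset,
        (insert (x 0) hIfin.toFinset).inf' ⟨x 0, Finset.mem_insert_self _ _⟩ δ, ?_, ?_⟩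
      · exact (Finset.lt_inf'_iff _).2 fun p _ => hδpos p
      · intro g hg
        refine hsub ?_
        refine hVsub fun p hp => ?_
        have hpF : p ∈ hIfin.toFinset := hIfin.mem_toFinset.2 hp
        have h1 := hg p hpF
        have h2 : (insert (x 0) hIfin.toFinset).inf'
            ⟨x 0, Finset.mem_insert_self _ _⟩ δ ≤ δ p :=
          Finset.inf'_le _ (Finset.mem_insert_of_mem hpF)
        exact hδsub p (by rw [mem_ball, dist_comm]; exact lt_of_lt_of_le h1 h2)
    · rintro ⟨F, δ, hδ, hsub⟩
      refine ⟨Set.pi ↑F (fun p => ball (f p) δ),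
        set_pi_mem_nhds F.finite_toSet (fun p _ => ball_mem_nhds _ hδ), ?_⟩
      intro g hg
      refine hsub fun p hp => ?_
      have := hg p hp
      rwa [mem_ball, dist_comm] at this
  have hforward : ∀ (f : M ≃ᵢ M) (F : Finset M) (δ : ℝ), 0 < δ →
      ∃ r > 0, {g : M ≃ᵢ M | d f g < r} ⊆ {g : M ≃ᵢ M | ∀ p ∈ F, dist (f p) (g p) < δ} := by
    intro f F δ hδ
    choose n hn using fun p : M => hx.exists_dist_lt p (show (0:ℝ) < δ / 4 by linarith)
    refine ⟨min (c (F.sup n)) (δ / 4), lt_min (hcpos _) (by linarith), ?_⟩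
    intro g hg p hp
    simp only [mem_setOf_eq] at hg
    have hnp : n p ≤ F.sup n := Finset.le_sup hp
    have hcle : c (F.sup n) ≤ c (n p) := hcanti hnp
    have hble : t f g (n p) ≤ d f g := le_trans (htle f g (n p)) (hTd f g)
    have ht1 : t f g (n p) < c (n p) :=
      lt_of_le_of_lt hble (lt_of_lt_of_le hg (le_trans (min_le_left _ _) hcle))
    have ht2 : t f g (n p) < δ / 4 :=
      lt_of_le_of_lt hble (lt_of_lt_of_le hg (min_le_right _ _))
    have hdist : dist (f (x (n p))) (g (x (n p))) < δ / 4 := by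
      rcases le_or_gt (c (n p)) (dist (f (x (n p))) (g (x (n p)))) with h | h
      · exfalso
        have : t f g (n p) = c (n p) := by rw [ht]; exact min_eq_left h
        rw [this] at ht1; exact lt_irrefl _ ht1
      · have : t f g (n p) = dist (f (x (n p))) (g (x (n p))) := by
          rw [ht]; exact min_eq_right h.le
        rw [this] at ht2; exact ht2
    calc dist (f p) (g p) ≤ dist (f (x (n p))) (g (x (n p))) + 2 * dist p (x (n p)) :=
          distA f g p (x (n p))
      _ < δ / 4 + 2 * (δ / 4) := by have := hn p; linarith
      _ ≤ δ := by linarith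
  have hback : ∀ (f : M ≃ᵢ M) (r : ℝ), 0 < r → ∃ (F : Finset M) (δ : ℝ), 0 < δ ∧
      {g : M ≃ᵢ M | ∀ p ∈ F, dist (f p) (g p) < δ} ⊆ {g : M ≃ᵢ M | d f g < r} := by
    intro f r hr
    obtain ⟨N0, hN0⟩ := exists_pow_lt_of_lt_one
      (show (0:ℝ) < r / 4 / ε by positivity) (show (1:ℝ)/2 < 1 by norm_num)
    set N : ℕ := N0 + 1 with hN
    have hNpos : 0 < N := Nat.succ_pos _
    have hN1 : (1:ℝ) ≤ (N:ℝ) := by exact_mod_cast hNpos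
    have hNne : (N:ℝ) ≠ 0 := by positivity
    have htailc : ε / 2 ^ N < r / 4 := by
      have h1 : ((1:ℝ)/2) ^ N ≤ ((1:ℝ)/2) ^ N0 := by
        apply pow_le_pow_of_le_one (by norm_num) (by norm_num)
        omega
      have h2 : ((1:ℝ)/2) ^ N < r / 4 / ε := lt_of_le_of_lt h1 hN0
      have h3 : ε / 2 ^ N = ε * ((1:ℝ)/2) ^ N := by
        rw [div_pow, one_pow]; ring
      rw [h3]
      calc ε * ((1:ℝ)/2) ^ N < ε * (r / 4 / ε) := by
            apply mul_lt_mul_of_pos_left h2 hε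
        _ = r / 4 := by field_simp
    have htail : ∀ f g : M ≃ᵢ M, ∑' k : ℕ, t f g (k + N) ≤ ε / 2 ^ N := by
      intro f g
      have hsum2 : Summable fun k : ℕ => c (k + N) := (summable_nat_add_iff N).2 hcsum
      have hsum1 : Summable fun k : ℕ => t f g (k + N) := (summable_nat_add_iff N).2 (htsumm f g)
      have h1 : ∑' k : ℕ, t f g (k + N) ≤ ∑' k : ℕ, c (k + N) :=
        Summable.tsum_le_tsum (fun k => min_le_left _ _) hsum1 hsum2
      have h2 : ∀ k : ℕ, c (k + N) = (ε / 2 ^ N) / 2 / 2 ^ k := by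
        intro k
        rw [hc]
        simp only
        rw [pow_add]
        ring
      have h3 : ∑' k : ℕ, c (k + N) = ε / 2 ^ N := by
        rw [tsum_congr h2]; exact tsum_geometric_two' _
      linarith
    refine ⟨Finset.image x (Finset.range N), r / (8 * N),
      div_pos hr (by positivity), ?_⟩
    intro g hg
    simp only [mem_setOf_eq] at hg ⊢
    have hkey : ∀ k, k < N → dist (f (x k)) (g (x k)) < r / (8 * N) := fun k hk =>
      hg (x k) (Finset.mem_image_of_mem x (Finset.mem_range.2 hk))
    have hsplit : (∑ k ∈ Finset.range N, t f g k) + ∑' k : ℕ, t f g (k + N) = T f g :=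
      Summable.sum_add_tsum_nat_add N (htsumm f g)
    have hsum1 : ∑ k ∈ Finset.range N, t f g k ≤ N * (r / (8 * N)) := by
      calc ∑ k ∈ Finset.range N, t f g k
          ≤ ∑ _k ∈ Finset.range N, r / (8 * N) := by
            refine Finset.sum_le_sum fun k hk => ?_
            exact le_of_lt (lt_of_le_of_lt (min_le_right _ _) (hkey k (Finset.mem_range.1 hk)))
        _ = N * (r / (8 * N)) := by rw [Finset.sum_const, Finset.card_range, nsmul_eq_mul]
    have hNr : (N:ℝ) * (r / (8 * N)) = r / 8 := by field_simp
    have h0 : dist (f (x 0)) (g (x 0)) < r / (8 * N) :=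
      hkey 0 hNpos
    have hr8 : r / (8 * N) ≤ r / 8 := by
      apply div_le_div_of_nonneg_left hr.le (by norm_num)
      nlinarith
    have hTbound : T f g ≤ r / 8 + r / 4 := by
      rw [← hsplit]
      have := htail f g
      nlinarith [hsum1, hNr, htailc]
    rw [hd]
    simp only
    nlinarith [hTbound, h0, hr8, hr]
  refine ⟨d, hdzero, hdsymm, hdtri, ?_, hdinv, hlow, hupp⟩
  intro f s
  rw [hnhds]
  constructor
  · rintro ⟨F, δ, hδ, hsub⟩
    obtain ⟨r, hrpos, hsub2⟩ := hforward f F δ hδ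
    exact ⟨r, hrpos, hsub2.trans hsub⟩
  · rintro ⟨r, hrpos, hsub⟩
    obtain ⟨F, δ, hδ, hsub2⟩ := hback f r hrpos
    exact ⟨F, δ, hδ, hsub2.trans hsub⟩

private lemma metrizable_of_compatible {X : Type*} [TopologicalSpace X] (d : X → X → ℝ)
    (h : IsCompatibleDist X d) : TopologicalSpace.MetrizableSpace X := by
  obtain ⟨h1, h2, h3, h4⟩ := h
  have H : ∀ s : Set X, IsOpen s ↔ ∀ x ∈ s, ∃ ε > 0, ∀ y, d x y < ε → y ∈ s := by
    intro s
    rw [isOpen_iff_mem_nhds]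
    refine forall₂_congr fun a _ => ?_
    rw [h4 a s]
    exact Iff.rfl
  letI := MetricSpace.ofDistTopology d (fun x => (h1 x x).2 rfl) h2 h3 H
    (fun x y h0 => (h1 x y).1 h0)
  infer_instance

theorem statement10 (M : Type*) [MetricSpace M] [ConnectedSpace M] [LocallyCompactSpace M]
    (hhom : ∀ x y : M, ∃ f : M ≃ᵢ M, f x = y)
    (G : Subgroup (M ≃ᵢ M)) (htrans : ∀ x y : M, ∃ g ∈ G, g x = y)
    (o : M) (ε : ℝ) (hε : 0 < ε) :
    letI : TopologicalSpace (M ≃ᵢ M) :=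
      TopologicalSpace.induced (fun f : M ≃ᵢ M => (⇑f : M → M)) Pi.topologicalSpace
    (∃ d_G : G → G → ℝ, IsCompatibleDist G d_G ∧ IsLeftInvariant d_G ∧
      (∀ g h : G, dist ((g : M ≃ᵢ M) o) ((h : M ≃ᵢ M) o) ≤ d_G g h) ∧
      IsQuasiIsometry 1 ε d_G (fun x y : M => dist x y)
        (fun g : G => (g : M ≃ᵢ M) o)) ∧
    TopologicalSpace.MetrizableSpace (M ≃ᵢ M) := by
  obtain ⟨x, hx, hx0⟩ := exists_dense_seq_start (M := M) o
  obtain ⟨d, hd1, hd2, hd3, hd4, hdinv, hlow, hupp⟩ := exists_good_dist x hx ε hε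
  rw [hx0] at hlow hupp
  letI : TopologicalSpace (M ≃ᵢ M) :=
    TopologicalSpace.induced (fun f : M ≃ᵢ M => (⇑f : M → M)) Pi.topologicalSpace
  refine ⟨⟨fun g h => d ↑g ↑h, ⟨?_, ?_, ?_, ?_⟩, ?_, ?_, ?_, ?_⟩, ?_⟩
  · exact fun g h => ⟨fun h0 => Subtype.ext ((hd1 _ _).1 h0), fun he => he ▸ (hd1 _ _).2 rfl⟩
  · exact fun g h => hd2 _ _
  · exact fun g h k => hd3 _ _ _
  · intro g s
    rw [nhds_induced Subtype.val g, Filter.mem_comap]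
    constructor
    · rintro ⟨u, hu, hsub⟩
      obtain ⟨r, hrpos, hsub2⟩ := (hd4 ↑g u).1 hu
      exact ⟨r, hrpos, fun h hh => hsub (hsub2 hh)⟩
    · rintro ⟨r, hrpos, hsub⟩
      exact ⟨{k | d ↑g k < r}, (hd4 ↑g _).2 ⟨r, hrpos, subset_rfl⟩, hsub⟩
  · intro g h₁ h₂
    have : ∀ a b : G, (↑(a * b) : M ≃ᵢ M) = ↑a * ↑b := fun a b => rfl
    simp only [this]
    exact hdinv _ _ _
  · exact fun g h => hlow _ _
  · intro g h
    refine ⟨?_, ?_⟩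
    · have h1 := hupp (↑g : M ≃ᵢ M) ↑h
      simp only [inv_one, one_mul]
      linarith
    · have h1 := hlow (↑g : M ≃ᵢ M) ↑h
      simp only [one_mul]
      linarith
  · intro z
    obtain ⟨k, hkG, hkz⟩ := htrans o z
    exact ⟨⟨k, hkG⟩, by simpa [hkz] using hε.le⟩
  · exact metrizable_of_compatible d ⟨hd1, hd2, hd3, hd4⟩
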